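/- Let R be a Tate ring with ring of definition R₀ and pseudo-uniformizer ϖ, and let t₁,…,tₙ ∈ R generate the unit ideal. Suppose r ∈ R satisfies: for each i there exists cᵢ ≥ 0 and a homogeneous polynomial gᵢ ∈ R₀[T₁,…,Tₙ] of degree dᵢ with tᵢ^{dᵢ}·r = gᵢ(t₁,…,tₙ). Then, with N = d₁+⋯+dₙ and A ≥ 0 such that ϖᴬtᵢ ∈ R₀ for all i, one has ϖ^{NA}·h(t₁,…,tₙ)·rᵐ ∈ R₀ for every homogeneous polynomial h ∈ R₀[T₁,…,Tₙ] of degree N and every m ≥ 0. -/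

import Mathlib

open MvPolynomial

theorem coeff_mul_mem {R : Type*} [CommRing R] (R₀ : Subring R) {σ : Type*} [DecidableEq σ]
    {p q : MvPolynomial σ R} (hp : ∀ c, p.coeff c ∈ R₀) (hq : ∀ c, q.coeff c ∈ R₀) :
    ∀ c, (p * q).coeff c ∈ R₀ := by
  intro c
  rw [coeff_mul]
  exact Subring.sum_mem _ fun x _ => Subring.mul_mem _ (hp _) (hq _)

theorem lem1 {R : Type*} [CommRing R] (R₀ : Subring R) (ϖ : Rˣ)
    {n : ℕ} (t : Fin n → R) {N A : ℕ} (hA : ∀ i, (ϖ : R) ^ A * t i ∈ R₀)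
    (h : MvPolynomial (Fin n) R) (hc : ∀ c, h.coeff c ∈ R₀) (hh : h.IsHomogeneous N) :
    (ϖ : R) ^ (N * A) * MvPolynomial.eval t h ∈ R₀ := by
  rw [eval_eq, Finset.mul_sum]
  apply Subring.sum_mem
  intro c hcs
  have hdeg : ∑ i ∈ c.support, c i = N := by
    have := hh (MvPolynomial.mem_support_iff.mp hcs)
    rw [← this, Finsupp.weight_apply, Finsupp.sum]
    simp [mul_comm]
  have key : (ϖ : R) ^ (N * A) = ∏ i ∈ c.support, ((ϖ : R) ^ A) ^ c i := by
    rw [Finset.prod_pow_eq_pow_sum, ← pow_mul, hdeg, mul_comm]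
  have e : (ϖ : R) ^ (N * A) * (h.coeff c * ∏ i ∈ c.support, t i ^ c i)
      = h.coeff c * ∏ i ∈ c.support, (((ϖ : R) ^ A) * t i) ^ c i := by
    simp only [mul_pow]
    rw [Finset.prod_mul_distrib, key]
    ring
  rw [e]
  exact Subring.mul_mem _ (hc c) (Subring.prod_mem _ fun i _ => Subring.pow_mem _ (hA i) _)

theorem step {R : Type*} [CommRing R] (R₀ : Subring R)
    {n : ℕ} (hn : 0 < n) (t : Fin n → R) (r : R) (d : Fin n → ℕ)
    (g : Fin n → MvPolynomial (Fin n) R)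
    (hgcoeff : ∀ i c, (g i).coeff c ∈ R₀)
    (hghom : ∀ i, (g i).IsHomogeneous (d i))
    (hgr : ∀ i, t i ^ d i * r = MvPolynomial.eval t (g i))
    {N : ℕ} (hN : N = ∑ i, d i)
    (h : MvPolynomial (Fin n) R) (hc : ∀ c, h.coeff c ∈ R₀) (hh : h.IsHomogeneous N) :
    ∃ h' : MvPolynomial (Fin n) R, (∀ c, h'.coeff c ∈ R₀) ∧ h'.IsHomogeneous N ∧
      MvPolynomial.eval t h' = MvPolynomial.eval t h * r := by
  have hdegc : ∀ c ∈ h.support, c.degree = N := by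
    intro c hcs
    have := hh (MvPolynomial.mem_support_iff.mp hcs)
    rw [← this, Finsupp.degree_eq_weight_one]
    rfl
  have pig : ∀ c : Fin n →₀ ℕ, ∃ i, c ∈ h.support → d i ≤ c i := by
    intro c
    by_cases hcs : c ∈ h.support
    · by_contra hcon
      push_neg at hcon
      have hdeg : ∑ i, c i = N := by
        rw [← hdegc c hcs, Finsupp.degree_apply,
          Finset.sum_subset (Finset.subset_univ c.support)]
        intro i _ hi
        simpa using Finsupp.notMem_support_iff.mp hi
      have hlt : ∑ i, c i < ∑ i, d i :=
        Finset.sum_lt_sum_of_nonempty (Finset.univ_nonempty_iff.mpr ⟨⟨0, hn⟩⟩)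
          (fun i _ => (hcon i).2)
      omega
    · exact ⟨⟨0, hn⟩, fun hx => absurd hx hcs⟩
  choose I hI using pig
  refine ⟨∑ c ∈ h.support,
      monomial (c - Finsupp.single (I c) (d (I c))) (h.coeff c) * g (I c), ?_, ?_, ?_⟩
  · intro k
    rw [coeff_sum]
    refine Subring.sum_mem _ fun c _ => coeff_mul_mem R₀ ?_ (hgcoeff _) k
    intro c'
    rw [coeff_monomial]
    split <;> [exact hc c; exact R₀.zero_mem]
  · apply IsHomogeneous.sum
    intro c hcs
    have h1 : (N - d (I c)) + d (I c) = N := by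
      have := Finsupp.le_degree (I c) c
      have := hI c hcs
      have := hdegc c hcs
      omega
    have h2 : (c - Finsupp.single (I c) (d (I c))).degree = N - d (I c) := by
      have hle : Finsupp.single (I c) (d (I c)) ≤ c :=
        Finsupp.single_le_iff.mpr (hI c hcs)
      have hadd : (c - Finsupp.single (I c) (d (I c))).degree
          + (Finsupp.single (I c) (d (I c))).degree = c.degree := by
        simp only [Finsupp.degree_eq_weight_one]
        rw [← map_add, tsub_add_cancel_of_le hle]
      have hs : (Finsupp.single (I c) (d (I c))).degree = d (I c) := by
        simp [Finsupp.degree_eq_weight_one, Finsupp.weight_apply, Finsupp.sum_single_index]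
      have := hdegc c hcs
      omega
    rw [← h1]
    exact (isHomogeneous_monomial _ h2).mul (hghom (I c))
  · rw [map_sum]
    have key : ∀ c ∈ h.support,
        MvPolynomial.eval t (monomial (c - Finsupp.single (I c) (d (I c))) (h.coeff c) * g (I c))
          = MvPolynomial.eval t (monomial c (h.coeff c)) * r := by
      intro c hcs
      have hle : Finsupp.single (I c) (d (I c)) ≤ c :=
        Finsupp.single_le_iff.mpr (hI c hcs)
      have hmon : monomial (c - Finsupp.single (I c) (d (I c))) (h.coeff c)
          * X (I c) ^ (d (I c)) = monomial c (h.coeff c) := by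
        rw [X_pow_eq_monomial, monomial_mul, mul_one, tsub_add_cancel_of_le hle]
      rw [map_mul, ← hgr (I c), ← mul_assoc, ← hmon]
      simp [mul_assoc]
    rw [Finset.sum_congr rfl key, ← Finset.sum_mul, ← map_sum,
      support_sum_monomial_coeff]


/-- The key induction in Lemma alain: if `tᵢ^{dᵢ}·r = gᵢ(t₁,…,tₙ)` with `gᵢ`
homogeneous of degree `dᵢ` with coefficients in `R₀`, then with `N = d₁ + ⋯ + dₙ` and
`A` such that `ϖᴬ·tᵢ ∈ R₀` for all `i`, one has `ϖ^{NA}·h(t₁,…,tₙ)·rᵐ ∈ R₀` for every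
homogeneous `h` of degree `N` with coefficients in `R₀` and every `m ≥ 0`. -/
theorem powerBounded_induction_step
    (R : Type*) [CommRing R] (R₀ : Subring R) (ϖ : Rˣ) (hϖ : (ϖ : R) ∈ R₀)
    (hloc : ∀ r : R, ∃ n : ℕ, (ϖ : R) ^ n * r ∈ R₀)
    (n : ℕ) (t : Fin n → R) (hspan : Ideal.span (Set.range t) = ⊤)
    (r : R) (d : Fin n → ℕ) (g : Fin n → MvPolynomial (Fin n) R)
    (hgcoeff : ∀ i c, (g i).coeff c ∈ R₀)
    (hghom : ∀ i, (g i).IsHomogeneous (d i))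
    (hgr : ∀ i, t i ^ d i * r = MvPolynomial.eval t (g i))
    (N : ℕ) (hN : N = ∑ i, d i)
    (A : ℕ) (hA : ∀ i, (ϖ : R) ^ A * t i ∈ R₀) :
    ∀ (h : MvPolynomial (Fin n) R), (∀ c, h.coeff c ∈ R₀) → h.IsHomogeneous N →
      ∀ m : ℕ, (ϖ : R) ^ (N * A) * MvPolynomial.eval t h * r ^ m ∈ R₀ := by
  rcases Nat.eq_zero_or_pos n with hn | hn
  · -- n = 0 : the ring is trivial
    subst hn
    have : Set.range t = ∅ := by
      rw [Set.range_eq_empty_iff]; exact ⟨fun i => absurd i.2 (by omega)⟩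
    rw [this, Ideal.span_empty] at hspan
    have h10 : (1 : R) = 0 := by
      have := hspan ▸ Submodule.mem_top (x := (1 : R)) (R := R)
      simpa using this
    intro h _ _ m
    have : (ϖ : R) ^ (N * A) * MvPolynomial.eval t h * r ^ m = 0 := by
      calc (ϖ : R) ^ (N * A) * MvPolynomial.eval t h * r ^ m
          = (ϖ : R) ^ (N * A) * MvPolynomial.eval t h * r ^ m * 1 := by ring
        _ = 0 := by rw [h10]; ring
    rw [this]; exact R₀.zero_mem
  · intro h hc hh m
    induction m generalizing h with
    | zero => simpa using lem1 R₀ ϖ t hA h hc hh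
    | succ m ih =>
      obtain ⟨h', hc', hh', he'⟩ := step R₀ hn t r d g hgcoeff hghom hgr hN h hc hh
      have := ih h' hc' hh'
      rw [he'] at this
      convert this using 1
      ring
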